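/- Let n ∈ ℕ and 0 < α₁ < ⋯ < α_n < 1. Then the set of spectral risk measures {ρ_g : g ∈ 𝒢₁, PSI(g) ∩ (0,1) = {α₁,…,α_n}} equals the set of functionals on L∞ of the form λ₀𝔼 + λ₁ ES_{α₁} + ⋯ + λ_n ES_{α_n}, where λ₀ ≥ 0, λ₁ > 0, …, λ_n > 0 and λ₀ + λ₁ + ⋯ + λ_n = 1. -/

import Mathlib

open MeasureTheory Filter Set

section Defs

variable {Ω : Type*} [MeasurableSpace Ω]

/-- An atomless probability space: every event can be split to achieve any smaller measure
(Sierpiński's property, equivalent to atomlessness for probability measures). -/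
def Atomless (P : Measure Ω) : Prop :=
  ∀ A : Set Ω, MeasurableSet A → ∀ r : ENNReal, r ≤ P A →
    ∃ B : Set Ω, B ⊆ A ∧ MeasurableSet B ∧ P B = r

/-- `A` is a tail event for `X`: outside a null set, `X ω ≥ X ω'` for `ω ∈ A`, `ω' ∈ Aᶜ`. -/
def IsTailEvent (P : Measure Ω) (X : Ω → ℝ) (A : Set Ω) : Prop :=
  MeasurableSet A ∧ ∃ N : Set Ω, P N = 0 ∧
    ∀ ω ∈ A, ω ∉ N → ∀ ω' ∈ Aᶜ, ω' ∉ N → X ω' ≤ X ω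

/-- `A` is a `p`-tail event for `X`: a tail event with `P A = 1 - p`. -/
def IsPTailEvent (P : Measure Ω) (X : Ω → ℝ) (p : ℝ) (A : Set Ω) : Prop :=
  IsTailEvent P X A ∧ P A = ENNReal.ofReal (1 - p)

/-- A random vector is `p`-concentrated if a single event is a `p`-tail event for every
component. -/
def PConcentrated (P : Measure Ω) {d : ℕ} (X : Fin d → Ω → ℝ) (p : ℝ) : Prop :=
  ∃ A : Set Ω, ∀ i, IsPTailEvent P (X i) p A

/-- A random vector is `K`-concentrated if it is `p`-concentrated for every `p ∈ K`. -/
def KConcentrated (P : Measure Ω) {d : ℕ} (X : Fin d → Ω → ℝ) (K : Set ℝ) : Prop :=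
  ∀ p ∈ K, PConcentrated P X p

/-- Left quantile function `Q_X⁻(p) = inf {x | ℙ(X ≤ x) ≥ p}` (also `VaR_p`). -/
noncomputable def leftQuantile (P : Measure Ω) (X : Ω → ℝ) (p : ℝ) : ℝ :=
  sInf {x : ℝ | ENNReal.ofReal p ≤ P {ω | X ω ≤ x}}

/-- Right quantile function `Q_X⁺(p) = inf {x | ℙ(X ≤ x) > p}` (also `VaR⁺_p`). -/
noncomputable def rightQuantile (P : Measure Ω) (X : Ω → ℝ) (p : ℝ) : ℝ :=
  sInf {x : ℝ | ENNReal.ofReal p < P {ω | X ω ≤ x}}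

/-- `Q_X : [0,1] → ℝ`, equal to `Q_X⁺` at `0` and to `Q_X⁻` on `(0,1]`. -/
noncomputable def Q (P : Measure Ω) (X : Ω → ℝ) (p : ℝ) : ℝ :=
  if p = 0 then rightQuantile P X 0 else leftQuantile P X p

/-- Membership in L∞: essentially bounded (and measurable) random variables. -/
def MemLinf (P : Measure Ω) (X : Ω → ℝ) : Prop :=
  Measurable X ∧ ∃ C : ℝ, ∀ᵐ ω ∂P, |X ω| ≤ C

/-- A functional `ρ` on L∞ is `K`-additive if it is additive on every `K`-concentrated
random vector (of dimension `d ≥ 2`) with essentially bounded components. -/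
def KAdditive (P : Measure Ω) (K : Set ℝ) (ρ : (Ω → ℝ) → ℝ) : Prop :=
  ∀ d : ℕ, 2 ≤ d → ∀ X : Fin d → Ω → ℝ, (∀ i, MemLinf P (X i)) →
    KConcentrated P X K → ρ (∑ i, X i) = ∑ i, ρ (X i)

/-- A pair of random variables is comonotonic. -/
def ComonotonePair (P : Measure Ω) (X Z : Ω → ℝ) : Prop :=
  ∀ᵐ w ∂(P.prod P), 0 ≤ (X w.1 - X w.2) * (Z w.1 - Z w.2)

/-- A random vector is `g`-comonotonic: some random variable `Z` with quantile function `g`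
on `[0,1]` is comonotonic with every component. -/
def GComonotone (P : Measure Ω) {d : ℕ} (g : ℝ → ℝ) (X : Fin d → Ω → ℝ) : Prop :=
  ∃ Z : Ω → ℝ, Measurable Z ∧ (∀ p ∈ Icc (0:ℝ) 1, Q P Z p = g p) ∧
    ∀ i, ComonotonePair P (X i) Z

/-- A functional `ρ` on L∞ is `g`-additive if it is additive on every `g`-comonotonic
random vector (of dimension `d ≥ 2`) with essentially bounded components. -/
def GAdditive (P : Measure Ω) (g : ℝ → ℝ) (ρ : (Ω → ℝ) → ℝ) : Prop :=
  ∀ d : ℕ, 2 ≤ d → ∀ X : Fin d → Ω → ℝ, (∀ i, MemLinf P (X i)) →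
    GComonotone P g X → ρ (∑ i, X i) = ∑ i, ρ (X i)

/-- The distortion riskmetric `I_h`. -/
noncomputable def distortionRM (P : Measure Ω) (h : ℝ → ℝ) (X : Ω → ℝ) : ℝ :=
  (∫ x in Iio (0:ℝ), (h ((P {ω | x < X ω}).toReal) - h 1)) +
    ∫ x in Ioi (0:ℝ), h ((P {ω | x < X ω}).toReal)

/-- The spectral risk measure `ρ_g(X) = ∫₀¹ g(t) Q_X(t) dt`. -/
noncomputable def specRM (P : Measure Ω) (g : ℝ → ℝ) (X : Ω → ℝ) : ℝ :=
  ∫ t in (0:ℝ)..1, g t * Q P X t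

/-- Expected Shortfall at level `p`. -/
noncomputable def ES (P : Measure Ω) (p : ℝ) (X : Ω → ℝ) : ℝ :=
  (1 - p)⁻¹ * ∫ q in p..1, leftQuantile P X q

end Defs

/-- The class 𝒢 of increasing functions on `[0,1]`, right-continuous at `0` and
left-continuous on `(0,1]`. -/
def MemG (g : ℝ → ℝ) : Prop :=
  MonotoneOn g (Icc 0 1) ∧
    Tendsto g (nhdsWithin 0 (Ioi 0)) (nhds (g 0)) ∧
    ∀ p ∈ Ioc (0:ℝ) 1, Tendsto g (nhdsWithin p (Iio p)) (nhds (g p))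

/-- `p` is a point of strict increase on the right of `g`. -/
def IsPSIR (g : ℝ → ℝ) (p : ℝ) : Prop :=
  p ∈ Ico (0:ℝ) 1 ∧ ∀ s ∈ Ioc p 1, g p < g s

/-- `p` is a point of strict increase on the left of `g`. -/
def IsPSIL (g : ℝ → ℝ) (p : ℝ) : Prop :=
  p ∈ Ioc (0:ℝ) 1 ∧ ∀ s ∈ Ico (0:ℝ) p, g s < g p

/-- The set of points of strict increase of `g`. -/
def PSI (g : ℝ → ℝ) : Set ℝ :=
  {p | IsPSIR g p ∨ IsPSIL g p}

/-- `f ≾ g`: there is an increasing `h` with `f = h ∘ g` a.e. on `[0,1]`. -/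
def Prec (f g : ℝ → ℝ) : Prop :=
  ∃ h : ℝ → ℝ, Monotone h ∧
    ∀ᵐ t ∂(volume.restrict (Icc (0:ℝ) 1)), f t = h (g t)

/-- The map `𝒱 : K ↦ (p ↦ sup ((0,p) ∩ K))` (with `sup ∅ = 0`, the junk value of `sSup` in `ℝ`). -/
noncomputable def VK (K : Set ℝ) (p : ℝ) : ℝ :=
  sSup (Ioo (0:ℝ) p ∩ K)

/-- A risk spectrum: a nonnegative element of 𝒢 integrating to 1. -/
def IsRiskSpectrum (g : ℝ → ℝ) : Prop :=
  MemG g ∧ (∀ t ∈ Icc (0:ℝ) 1, 0 ≤ g t) ∧ (∫ t in (0:ℝ)..1, g t) = 1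
section Aux
set_option linter.unusedSectionVars false
variable {Ω : Type*} [MeasurableSpace Ω] (P : Measure Ω) [IsProbabilityMeasure P]
variable {X : Ω → ℝ} {C : ℝ}

lemma bound_nonneg (hC : ∀ᵐ ω ∂P, |X ω| ≤ C) : 0 ≤ C := by
  obtain ⟨ω, hω⟩ := hC.exists
  exact (abs_nonneg _).trans hω

lemma meas_top (hXm : Measurable X) (hC : ∀ᵐ ω ∂P, |X ω| ≤ C) : P {ω | X ω ≤ C} = 1 := by
  have h0 : P {ω | C < X ω} = 0 := by
    refine measure_mono_null (fun ω hω => ?_) (ae_iff.1 hC)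
    simp only [mem_setOf_eq, not_le] at hω ⊢
    exact lt_of_lt_of_le hω (le_abs_self _)
  have he : {ω | X ω ≤ C} = {ω | C < X ω}ᶜ := by ext ω; simp [not_lt]
  rw [he, prob_compl_eq_one_sub (measurableSet_lt measurable_const hXm), h0, tsub_zero]

lemma meas_low (hC : ∀ᵐ ω ∂P, |X ω| ≤ C) {x : ℝ} (hx : x < -C) : P {ω | X ω ≤ x} = 0 := by
  refine measure_mono_null (fun ω hω => ?_) (ae_iff.1 hC)
  simp only [mem_setOf_eq, not_le] at hω ⊢
  have h1 : -(X ω) > C := by linarith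
  exact lt_of_lt_of_le h1 (neg_le_abs _)

end Aux
section Aux2
set_option linter.unusedSectionVars false
variable {Ω : Type*} [MeasurableSpace Ω] (P : Measure Ω) [IsProbabilityMeasure P]
variable {X : Ω → ℝ} {C : ℝ}

lemma S_subset (hC : ∀ᵐ ω ∂P, |X ω| ≤ C) {p : ℝ} (hp : 0 < p) :
    {x : ℝ | ENNReal.ofReal p ≤ P {ω | X ω ≤ x}} ⊆ Ici (-C) := by
  intro x hx
  by_contra h
  simp only [mem_Ici, not_le] at h
  rw [mem_setOf_eq, meas_low P hC (by simpa using h)] at hx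
  exact absurd (le_antisymm (le_of_le_of_eq hx rfl) zero_le).symm
    (by simpa using (ENNReal.ofReal_pos.2 hp).ne')

lemma S_mem (hXm : Measurable X) (hC : ∀ᵐ ω ∂P, |X ω| ≤ C) {p : ℝ} (hp : p ≤ 1) :
    C ∈ {x : ℝ | ENNReal.ofReal p ≤ P {ω | X ω ≤ x}} := by
  rw [mem_setOf_eq, meas_top P hXm hC]
  exact ENNReal.ofReal_le_one.2 hp

lemma lq_le_iff (hXm : Measurable X) (hC : ∀ᵐ ω ∂P, |X ω| ≤ C) {p x : ℝ}
    (hp0 : 0 < p) (hp1 : p ≤ 1) :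
    leftQuantile P X p ≤ x ↔ ENNReal.ofReal p ≤ P {ω | X ω ≤ x} := by
  constructor
  · intro h
    have hbdd : BddBelow {x : ℝ | ENNReal.ofReal p ≤ P {ω | X ω ≤ x}} :=
      ⟨-C, S_subset P hC hp0⟩
    have hne : {x : ℝ | ENNReal.ofReal p ≤ P {ω | X ω ≤ x}}.Nonempty :=
      ⟨C, S_mem P hXm hC hp1⟩
    have hk : ∀ k : ℕ, ENNReal.ofReal p ≤ P {ω | X ω ≤ x + 1/(k+1)} := by
      intro k
      have hlt : leftQuantile P X p < x + 1/(k+1) :=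
        lt_of_le_of_lt h (lt_add_of_pos_right x (by positivity))
      obtain ⟨y, hy, hyx⟩ := (csInf_lt_iff hbdd hne).1 hlt
      exact hy.trans (measure_mono (fun ω hω => le_trans hω hyx.le))
    -- continuity from above
    have hinter : {ω | X ω ≤ x} = ⋂ k : ℕ, {ω | X ω ≤ x + 1/(k+1)} := by
      ext ω
      simp only [mem_iInter, mem_setOf_eq]
      constructor
      · intro h k; exact h.trans (le_add_of_nonneg_right (by positivity))
      · intro h
        have htt : Tendsto (fun k : ℕ => x + 1/((k:ℝ)+1)) atTop (nhds x) := by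
          have : Tendsto (fun k : ℕ => x + 1/((k:ℝ)+1)) atTop (nhds (x + 0)) :=
            tendsto_const_nhds.add tendsto_one_div_add_atTop_nhds_zero_nat
          simpa using this
        exact ge_of_tendsto htt (Eventually.of_forall h)
    have htend : Tendsto (fun k : ℕ => P {ω | X ω ≤ x + 1/(k+1)}) atTop
        (nhds (P {ω | X ω ≤ x})) := by
      rw [hinter]
      exact tendsto_measure_iInter_atTop
        (fun k => (hXm measurableSet_Iic).nullMeasurableSet)
        (fun i j hij => fun ω hω => by
          simp only [mem_setOf_eq] at hω ⊢
          have h1 : (1:ℝ)/((j:ℝ)+1) ≤ 1/((i:ℝ)+1) := by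
            apply one_div_le_one_div_of_le
            · positivity
            · exact_mod_cast Nat.add_le_add_right hij 1
          linarith)
        ⟨0, measure_ne_top _ _⟩
    exact ge_of_tendsto htend (Eventually.of_forall hk)
  · intro h
    exact csInf_le ⟨-C, S_subset P hC hp0⟩ h

end Aux2
section Aux3
set_option linter.unusedSectionVars false
variable {Ω : Type*} [MeasurableSpace Ω] (P : Measure Ω) [IsProbabilityMeasure P]
variable {X : Ω → ℝ} {C : ℝ}

lemma lq_le_C (hXm : Measurable X) (hC : ∀ᵐ ω ∂P, |X ω| ≤ C) {p : ℝ}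
    (hp0 : 0 < p) (hp1 : p ≤ 1) : leftQuantile P X p ≤ C :=
  csInf_le ⟨-C, S_subset P hC hp0⟩ (S_mem P hXm hC hp1)

lemma neg_C_le_lq (hXm : Measurable X) (hC : ∀ᵐ ω ∂P, |X ω| ≤ C) {p : ℝ}
    (hp0 : 0 < p) (hp1 : p ≤ 1) : -C ≤ leftQuantile P X p :=
  le_csInf ⟨C, S_mem P hXm hC hp1⟩ (fun y hy => S_subset P hC hp0 hy)

lemma lq_monoOn (hXm : Measurable X) (hC : ∀ᵐ ω ∂P, |X ω| ≤ C) :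
    MonotoneOn (leftQuantile P X) (Ioc (0:ℝ) 1) := by
  intro p hp q hq hpq
  apply csInf_le_csInf ⟨-C, S_subset P hC hp.1⟩ ⟨C, S_mem P hXm hC hq.2⟩
  intro x hx
  exact le_trans (ENNReal.ofReal_le_ofReal hpq) hx

lemma rq0_le_lq (hXm : Measurable X) (hC : ∀ᵐ ω ∂P, |X ω| ≤ C) {p : ℝ}
    (hp0 : 0 < p) (hp1 : p ≤ 1) : rightQuantile P X 0 ≤ leftQuantile P X p := by
  apply csInf_le_csInf _ ⟨C, S_mem P hXm hC hp1⟩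
  · intro x hx
    exact lt_of_lt_of_le (ENNReal.ofReal_pos.2 hp0) hx |>.trans_le le_rfl |> fun h => by
      simpa using lt_of_le_of_lt (by simp : ENNReal.ofReal 0 ≤ 0) h
  · refine ⟨-C, fun x hx => ?_⟩
    by_contra h
    push_neg at h
    rw [mem_setOf_eq, meas_low P hC (by simpa using h)] at hx
    simp at hx

lemma neg_C_le_rq0 (hXm : Measurable X) (hC : ∀ᵐ ω ∂P, |X ω| ≤ C) :
    -C ≤ rightQuantile P X 0 := by
  apply le_csInf
  · refine ⟨C, ?_⟩
    rw [mem_setOf_eq, meas_top P hXm hC]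
    simp
  · intro y hy
    by_contra h
    push_neg at h
    rw [mem_setOf_eq, meas_low P hC (by simpa using h)] at hy
    simp at hy

lemma Q_monoOn (hXm : Measurable X) (hC : ∀ᵐ ω ∂P, |X ω| ≤ C) :
    MonotoneOn (Q P X) (Icc (0:ℝ) 1) := by
  intro p hp q hq hpq
  unfold Q
  rcases eq_or_lt_of_le hp.1 with h0p | h0p
  · rcases eq_or_lt_of_le hpq with hpq' | hpq'
    · subst hpq'; exact le_rfl
    · rw [if_pos h0p.symm, if_neg (by linarith [h0p] : ¬ q = 0)]
      exact rq0_le_lq P hXm hC (h0p ▸ hpq'.trans_le le_rfl |> fun _ => by linarith) hq.2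
  · rw [if_neg (by linarith : ¬ p = 0), if_neg (by linarith : ¬ q = 0)]
    exact lq_monoOn P hXm hC ⟨h0p, hp.2⟩ ⟨lt_of_lt_of_le h0p hpq, hq.2⟩ hpq

lemma Q_bdd (hXm : Measurable X) (hC : ∀ᵐ ω ∂P, |X ω| ≤ C) {t : ℝ}
    (ht : t ∈ Icc (0:ℝ) 1) : |Q P X t| ≤ C := by
  unfold Q
  rcases eq_or_lt_of_le ht.1 with h0 | h0
  · rw [if_pos h0.symm, abs_le]
    refine ⟨neg_C_le_rq0 P hXm hC, ?_⟩
    exact (rq0_le_lq P hXm hC one_pos le_rfl).trans (lq_le_C P hXm hC one_pos le_rfl)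
  · rw [if_neg (by linarith : ¬ t = 0), abs_le]
    exact ⟨neg_C_le_lq P hXm hC h0 ht.2, lq_le_C P hXm hC h0 ht.2⟩

end Aux3
section Aux4
set_option linter.unusedSectionVars false
variable {Ω : Type*} [MeasurableSpace Ω] (P : Measure Ω) [IsProbabilityMeasure P]
variable {X : Ω → ℝ} {C : ℝ}

lemma lq_aemeas (hXm : Measurable X) (hC : ∀ᵐ ω ∂P, |X ω| ≤ C) :
    AEMeasurable (leftQuantile P X) (volume.restrict (Ioc (0:ℝ) 1)) :=
  aemeasurable_restrict_of_monotoneOn measurableSet_Ioc (lq_monoOn P hXm hC)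

lemma lq_map (hXm : Measurable X) (hC : ∀ᵐ ω ∂P, |X ω| ≤ C) :
    (volume.restrict (Ioc (0:ℝ) 1)).map (leftQuantile P X) = P.map X := by
  have hmea := lq_aemeas P hXm hC
  haveI hfin : IsFiniteMeasure ((volume.restrict (Ioc (0:ℝ) 1)).map (leftQuantile P X)) := by
    constructor
    rw [Measure.map_apply_of_aemeasurable hmea MeasurableSet.univ, Set.preimage_univ,
      Measure.restrict_apply MeasurableSet.univ, Set.univ_inter, Real.volume_Ioc]
    simp
  refine Measure.ext_of_Iic _ _ (fun a => ?_)
  rw [Measure.map_apply_of_aemeasurable hmea measurableSet_Iic,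
    Measure.map_apply_of_aemeasurable hXm.aemeasurable measurableSet_Iic,
    Measure.restrict_apply' measurableSet_Ioc]
  have hXa : X ⁻¹' Iic a = {ω | X ω ≤ a} := rfl
  rw [hXa]
  set r := (P {ω | X ω ≤ a}).toReal with hr
  have hr0 : 0 ≤ r := ENNReal.toReal_nonneg
  have hr1 : r ≤ 1 := by
    rw [hr]
    exact ENNReal.toReal_le_of_le_ofReal one_pos.le (by simp [prob_le_one])
  have hset : leftQuantile P X ⁻¹' Iic a ∩ Ioc 0 1 = Ioc (0:ℝ) r := by
    ext p
    simp only [mem_inter_iff, mem_preimage, mem_Iic, mem_Ioc]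
    constructor
    · rintro ⟨hle, hp0, hp1⟩
      refine ⟨hp0, ?_⟩
      have := (lq_le_iff P hXm hC hp0 hp1).1 hle
      rwa [ENNReal.ofReal_le_iff_le_toReal (measure_ne_top _ _)] at this
    · rintro ⟨hp0, hpr⟩
      have hp1 : p ≤ 1 := hpr.trans hr1
      refine ⟨?_, hp0, hp1⟩
      rw [lq_le_iff P hXm hC hp0 hp1]
      rw [ENNReal.ofReal_le_iff_le_toReal (measure_ne_top _ _)]
      exact hpr
  rw [hset, Real.volume_Ioc, sub_zero, ENNReal.ofReal_toReal (measure_ne_top _ _)]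

lemma intQ (hXm : Measurable X) (hC : ∀ᵐ ω ∂P, |X ω| ≤ C) :
    ∫ t in (0:ℝ)..1, Q P X t = ∫ ω, X ω ∂P := by
  rw [intervalIntegral.integral_of_le zero_le_one]
  have h1 : ∫ t in Ioc (0:ℝ) 1, Q P X t = ∫ t in Ioc (0:ℝ) 1, leftQuantile P X t := by
    refine setIntegral_congr_fun measurableSet_Ioc (fun t ht => ?_)
    unfold Q
    rw [if_neg ht.1.ne']
  rw [h1]
  have h2 := integral_map (φ := leftQuantile P X) (lq_aemeas P hXm hC)
    (aestronglyMeasurable_id (α := ℝ))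
  have h3 := integral_map (μ := P) (φ := X) hXm.aemeasurable (aestronglyMeasurable_id (α := ℝ))
  simp only [id_eq] at h2 h3
  rw [← h2, lq_map P hXm hC, h3]

end Aux4
section Aux5
set_option linter.unusedSectionVars false
variable {Ω : Type*} [MeasurableSpace Ω] (P : Measure Ω) [IsProbabilityMeasure P]
variable {X : Ω → ℝ} {C : ℝ}

lemma ite_mul_eq_indicator (a : ℝ) (f : ℝ → ℝ) :
    (fun t => (if a < t then (1:ℝ) else 0) * f t) = (Ioi a).indicator f := by
  funext t
  by_cases h : a < t
  · rw [if_pos h, one_mul, indicator_of_mem (by exact h)]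
  · rw [if_neg h, zero_mul, indicator_of_notMem (by exact h)]

lemma Q_intervalIntegrable (hXm : Measurable X) (hC : ∀ᵐ ω ∂P, |X ω| ≤ C) :
    IntervalIntegrable (Q P X) volume 0 1 := by
  apply MonotoneOn.intervalIntegrable
  rw [uIcc_of_le zero_le_one]
  exact Q_monoOn P hXm hC

lemma indicator_intervalIntegrable {f : ℝ → ℝ} (a : ℝ)
    (hf : IntervalIntegrable f volume 0 1) :
    IntervalIntegrable (fun t => (if a < t then (1:ℝ) else 0) * f t) volume 0 1 := by
  rw [ite_mul_eq_indicator]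
  exact ⟨hf.1.indicator measurableSet_Ioi, hf.2.indicator measurableSet_Ioi⟩

lemma restrict_Ioi_Ioc {a : ℝ} (ha : 0 ≤ a) (ha1 : a ≤ 1) :
    Ioi a ∩ Ioc (0:ℝ) 1 = Ioc a 1 := by
  ext t
  simp only [mem_inter_iff, mem_Ioi, mem_Ioc]
  constructor
  · rintro ⟨h1, _, h3⟩; exact ⟨h1, h3⟩
  · rintro ⟨h1, h2⟩; exact ⟨h1, lt_of_le_of_lt ha h1, h2⟩

lemma int_ind_mul {f : ℝ → ℝ} {a : ℝ} (ha : 0 ≤ a) (ha1 : a ≤ 1) :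
    ∫ t in (0:ℝ)..1, (if a < t then (1:ℝ) else 0) * f t = ∫ t in Ioc a 1, f t := by
  rw [intervalIntegral.integral_of_le zero_le_one, ite_mul_eq_indicator,
    integral_indicator measurableSet_Ioi, Measure.restrict_restrict measurableSet_Ioi,
    restrict_Ioi_Ioc ha ha1]

lemma intQind (hXm : Measurable X) (hC : ∀ᵐ ω ∂P, |X ω| ≤ C) {a : ℝ}
    (ha : 0 ≤ a) (ha1 : a ≤ 1) :
    ∫ t in (0:ℝ)..1, (if a < t then (1:ℝ) else 0) * Q P X t
      = ∫ q in a..1, leftQuantile P X q := by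
  rw [int_ind_mul ha ha1, intervalIntegral.integral_of_le ha1]
  refine setIntegral_congr_fun measurableSet_Ioc (fun t ht => ?_)
  unfold Q
  rw [if_neg (lt_of_le_of_lt ha ht.1).ne']

lemma intInd {a : ℝ} (ha : 0 ≤ a) (ha1 : a ≤ 1) :
    ∫ t in (0:ℝ)..1, (if a < t then (1:ℝ) else 0) = 1 - a := by
  have h : ∫ t in (0:ℝ)..1, (if a < t then (1:ℝ) else 0)
      = ∫ t in (0:ℝ)..1, (if a < t then (1:ℝ) else 0) * (fun _ => (1:ℝ)) t := by
    simp
  rw [h, int_ind_mul ha ha1]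
  simp [Real.volume_Ioc, ENNReal.toReal_ofReal (by linarith : (0:ℝ) ≤ 1 - a), ha1]

end Aux5
section Aux6
set_option linter.unusedSectionVars false
variable {Ω : Type*} [MeasurableSpace Ω] (P : Measure Ω) [IsProbabilityMeasure P]
variable {X : Ω → ℝ} {C : ℝ}

lemma core_int (hXm : Measurable X) (hC : ∀ᵐ ω ∂P, |X ω| ≤ C) (l₀ : ℝ) {n : ℕ}
    (α : Fin n → ℝ) (c : Fin n → ℝ) (hα : ∀ i, α i ∈ Ioo (0:ℝ) 1) :
    ∫ t in (0:ℝ)..1, (l₀ + ∑ i, c i * (if α i < t then (1:ℝ) else 0)) * Q P X t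
      = l₀ * (∫ ω, X ω ∂P) + ∑ i, c i * ∫ q in (α i)..1, leftQuantile P X q := by
  have hQI := Q_intervalIntegrable P hXm hC
  have hfi : ∀ i : Fin n, IntervalIntegrable
      (fun t => c i * ((if α i < t then (1:ℝ) else 0) * Q P X t)) volume 0 1 :=
    fun i => (indicator_intervalIntegrable (α i) hQI).const_mul _
  have hfe : (fun t => (l₀ + ∑ i, c i * (if α i < t then (1:ℝ) else 0)) * Q P X t)
      = fun t => l₀ * Q P X t
        + ∑ i, c i * ((if α i < t then (1:ℝ) else 0) * Q P X t) := by
    funext t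
    rw [add_mul, Finset.sum_mul]
    congr 1
    exact Finset.sum_congr rfl fun i _ => by ring
  have hg : IntervalIntegrable
      (fun t => ∑ i, c i * ((if α i < t then (1:ℝ) else 0) * Q P X t)) volume 0 1 := by
    have := IntervalIntegrable.sum (μ := volume) (a := (0:ℝ)) (b := 1) Finset.univ
      (fun i (_ : i ∈ Finset.univ) => hfi i)
    have he := funext (fun t => Finset.sum_apply t Finset.univ
      (fun i => fun u => c i * ((if α i < u then (1:ℝ) else 0) * Q P X u)))
    rwa [he] at this
  rw [hfe, intervalIntegral.integral_add (hQI.const_mul l₀) hg,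
    intervalIntegral.integral_const_mul, intQ P hXm hC,
    intervalIntegral.integral_finset_sum (fun i _ => hfi i)]
  congr 1
  refine Finset.sum_congr rfl fun i _ => ?_
  rw [intervalIntegral.integral_const_mul,
    intQind P hXm hC (hα i).1.le (hα i).2.le]

lemma core_int_one (l₀ : ℝ) {n : ℕ}
    (α : Fin n → ℝ) (c : Fin n → ℝ) (hα : ∀ i, α i ∈ Ioo (0:ℝ) 1) :
    ∫ t in (0:ℝ)..1, (l₀ + ∑ i, c i * (if α i < t then (1:ℝ) else 0))
      = l₀ + ∑ i, c i * (1 - α i) := by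
  have hfi : ∀ i : Fin n, IntervalIntegrable
      (fun t => c i * (if α i < t then (1:ℝ) else 0)) volume 0 1 := by
    intro i
    have : IntervalIntegrable (fun t => (if α i < t then (1:ℝ) else 0) * (fun _ => (1:ℝ)) t)
        volume 0 1 := indicator_intervalIntegrable _ intervalIntegrable_const
    simpa using this.const_mul (c i)
  have hg : IntervalIntegrable
      (fun t => ∑ i, c i * (if α i < t then (1:ℝ) else 0)) volume 0 1 := by
    have := IntervalIntegrable.sum (μ := volume) (a := (0:ℝ)) (b := 1) Finset.univ
      (fun i (_ : i ∈ Finset.univ) => hfi i)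
    have he := funext (fun t => Finset.sum_apply t Finset.univ
      (fun i => fun u => c i * (if α i < u then (1:ℝ) else 0)))
    rwa [he] at this
  rw [intervalIntegral.integral_add intervalIntegrable_const hg,
    intervalIntegral.integral_finset_sum (fun i _ => hfi i)]
  simp only [intervalIntegral.integral_const, smul_eq_mul, sub_zero, one_mul]
  congr 1
  refine Finset.sum_congr rfl fun i _ => ?_
  rw [intervalIntegral.integral_const_mul, intInd (hα i).1.le (hα i).2.le]

end Aux6
section Aux7
set_option linter.unusedSectionVars false
variable {n : ℕ} {α : Fin n → ℝ} {l₀ : ℝ} {c : Fin n → ℝ}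

lemma sg_mono (hc : ∀ i, 0 ≤ c i) :
    Monotone (fun t => l₀ + ∑ i, c i * (if α i < t then (1:ℝ) else 0)) := by
  intro s t hst
  apply add_le_add le_rfl
  apply Finset.sum_le_sum
  intro i _
  apply mul_le_mul_of_nonneg_left _ (hc i)
  by_cases h : α i < s
  · rw [if_pos h, if_pos (h.trans_le hst)]
  · rw [if_neg h]
    by_cases h2 : α i < t <;> simp [h2]

lemma sg_const_left {p : ℝ} (hp : 0 < p) :
    ∃ s, 0 ≤ s ∧ s < p ∧ ∀ u, s < u → u ≤ p →
      l₀ + ∑ i, c i * (if α i < u then (1:ℝ) else 0)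
        = l₀ + ∑ i, c i * (if α i < p then (1:ℝ) else 0) := by
  classical
  set T : Finset ℝ := insert 0 ((Finset.univ.image α).filter (· < p)) with hT
  have h0T : (0:ℝ) ∈ T := Finset.mem_insert_self _ _
  set s := T.max' ⟨0, h0T⟩ with hs
  have hsmem := T.max'_mem ⟨0, h0T⟩
  have hsp : s < p := by
    rw [← hs] at hsmem
    rcases Finset.mem_insert.1 hsmem with h | h
    · rw [h]; exact hp
    · exact (Finset.mem_filter.1 h).2
  have hs0 : 0 ≤ s := Finset.le_max' T 0 h0T
  refine ⟨s, hs0, hsp, fun u hsu hup => ?_⟩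
  congr 1
  apply Finset.sum_congr rfl
  intro i _
  congr 1
  by_cases h : α i < p
  · have hiT : α i ∈ T := Finset.mem_insert_of_mem
      (Finset.mem_filter.2 ⟨Finset.mem_image_of_mem α (Finset.mem_univ i), h⟩)
    have : α i ≤ s := Finset.le_max' T _ hiT
    rw [if_pos (lt_of_le_of_lt this hsu), if_pos h]
  · push_neg at h
    rw [if_neg (by push_neg; exact hup.trans h), if_neg (by push_neg; exact h)]

lemma sg_const_right {p : ℝ} (hp : p < 1) (hpr : p ∉ range α) :
    ∃ s, p < s ∧ s ≤ 1 ∧ ∀ u, p ≤ u → u ≤ s →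
      l₀ + ∑ i, c i * (if α i < u then (1:ℝ) else 0)
        = l₀ + ∑ i, c i * (if α i < p then (1:ℝ) else 0) := by
  classical
  set T : Finset ℝ := insert 1 ((Finset.univ.image α).filter (p < ·)) with hT
  have h1T : (1:ℝ) ∈ T := Finset.mem_insert_self _ _
  set m := T.min' ⟨1, h1T⟩ with hm
  have hmmem := T.min'_mem ⟨1, h1T⟩
  have hpm : p < m := by
    rw [← hm] at hmmem
    rcases Finset.mem_insert.1 hmmem with h | h
    · rw [h]; exact hp
    · exact (Finset.mem_filter.1 h).2
  have hm1 : m ≤ 1 := Finset.min'_le T 1 h1T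
  refine ⟨(p + m)/2, by linarith, by linarith, fun u hpu hus => ?_⟩
  congr 1
  apply Finset.sum_congr rfl
  intro i _
  congr 1
  rcases lt_trichotomy (α i) p with h | h | h
  · rw [if_pos (h.trans_le hpu), if_pos h]
  · exact absurd ⟨i, h⟩ hpr
  · have hiT : α i ∈ T := Finset.mem_insert_of_mem
      (Finset.mem_filter.2 ⟨Finset.mem_image_of_mem α (Finset.mem_univ i), h⟩)
    have hmi : m ≤ α i := Finset.min'_le T _ hiT
    rw [if_neg (by push_neg; linarith), if_neg (by push_neg; exact h.le)]

lemma sg_memG (hα : ∀ i, α i ∈ Ioo (0:ℝ) 1) (hc : ∀ i, 0 ≤ c i) :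
    MemG (fun t => l₀ + ∑ i, c i * (if α i < t then (1:ℝ) else 0)) := by
  refine ⟨(sg_mono hc).monotoneOn _, ?_, ?_⟩
  · obtain ⟨s, hps, hs1, hcon⟩ := sg_const_right (α := α) (l₀ := l₀) (c := c)
      (p := 0) one_pos (by rintro ⟨i, hi⟩; exact (hα i).1.ne' hi)
    have hev : ∀ᶠ u in nhdsWithin 0 (Ioi 0),
        (fun t => l₀ + ∑ i, c i * (if α i < t then (1:ℝ) else 0)) u
          = l₀ + ∑ i, c i * (if α i < (0:ℝ) then (1:ℝ) else 0) := by
      filter_upwards [Ioo_mem_nhdsGT_of_mem (⟨le_refl 0, hps⟩ : (0:ℝ) ∈ Ico 0 s)]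
        with u hu
      exact hcon u hu.1.le hu.2.le
    exact tendsto_const_nhds.congr' (EventuallyEq.symm hev)
  · intro p hp
    obtain ⟨s, hs0, hsp, hcon⟩ := sg_const_left (α := α) (l₀ := l₀) (c := c) hp.1
    have hev : ∀ᶠ u in nhdsWithin p (Iio p),
        (fun t => l₀ + ∑ i, c i * (if α i < t then (1:ℝ) else 0)) u
          = l₀ + ∑ i, c i * (if α i < p then (1:ℝ) else 0) := by
      filter_upwards [Ioo_mem_nhdsLT_of_mem (⟨hsp, le_refl p⟩ : p ∈ Ioc s p)]
        with u hu
      exact hcon u hu.1 hu.2.le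
    exact tendsto_const_nhds.congr' (EventuallyEq.symm hev)

lemma sg_psi (hα : ∀ i, α i ∈ Ioo (0:ℝ) 1) (hc : ∀ i, 0 < c i) :
    PSI (fun t => l₀ + ∑ i, c i * (if α i < t then (1:ℝ) else 0)) ∩ Ioo 0 1
      = range α := by
  ext p
  simp only [mem_inter_iff, PSI, mem_setOf_eq]
  constructor
  · rintro ⟨hPSI, hp⟩
    by_contra hpr
    rcases hPSI with hR | hL
    · obtain ⟨s, hps, hs1, hcon⟩ := sg_const_right (α := α) (l₀ := l₀) (c := c)
        hp.2 hpr
      have h2 := hR.2 ((p+s)/2) ⟨by linarith, by linarith⟩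
      simp only at h2
      rw [hcon ((p+s)/2) (by linarith) (by linarith)] at h2
      exact lt_irrefl _ h2
    · obtain ⟨s, hs0, hsp, hcon⟩ := sg_const_left (α := α) (l₀ := l₀) (c := c) hp.1
      have h2 := hL.2 ((s+p)/2) ⟨by linarith, by linarith⟩
      simp only at h2
      rw [hcon ((s+p)/2) (by linarith) (by linarith)] at h2
      exact lt_irrefl _ h2
  · rintro ⟨i, rfl⟩
    refine ⟨Or.inl ⟨⟨(hα i).1.le, (hα i).2⟩, fun s hs => ?_⟩, hα i⟩
    apply add_lt_add_of_le_of_lt le_rfl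
    apply Finset.sum_lt_sum
    · intro j _
      apply mul_le_mul_of_nonneg_left _ (hc j).le
      by_cases h : α j < α i
      · rw [if_pos h, if_pos (h.trans hs.1)]
      · rw [if_neg h]
        by_cases h2 : α j < s <;> simp [h2]
    · refine ⟨i, Finset.mem_univ i, ?_⟩
      rw [if_neg (lt_irrefl _), if_pos hs.1, mul_zero, mul_one]
      exact hc i

lemma sg_nonneg (hl₀ : 0 ≤ l₀) (hc : ∀ i, 0 ≤ c i) (t : ℝ) :
    0 ≤ l₀ + ∑ i, c i * (if α i < t then (1:ℝ) else 0) := by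
  apply add_nonneg hl₀
  apply Finset.sum_nonneg
  intro i _
  apply mul_nonneg (hc i)
  by_cases h : α i < t <;> simp [h]

end Aux7
section Aux8

lemma const_of_no_psi {g : ℝ → ℝ} (hg : MemG g) {u v : ℝ} (hu : 0 ≤ u) (hv : v ≤ 1)
    (hdisj : Ioo u v ∩ PSI g = ∅)
    {s t : ℝ} (hs : s ∈ Ioo u v) (ht : t ∈ Ioo u v) (hst : s ≤ t) : g s = g t := by
  rcases eq_or_lt_of_le (hg.1 ⟨by linarith [hs.1], by linarith [hs.2]⟩
    ⟨by linarith [ht.1], by linarith [ht.2]⟩ hst) with h | h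
  · exact h
  exfalso
  set c := (g s + g t)/2 with hc
  set A := {r ∈ Icc s t | g r ≤ c} with hA
  have hsA : s ∈ A := ⟨⟨le_refl s, hst⟩, by rw [hc]; linarith⟩
  have hbdd : BddAbove A := ⟨t, fun r hr => hr.1.2⟩
  set p := sSup A with hp
  have hsp : s ≤ p := le_csSup hbdd hsA
  have hpt : p ≤ t := csSup_le ⟨s, hsA⟩ (fun r hr => hr.1.2)
  have hpuv : p ∈ Ioo u v := ⟨lt_of_lt_of_le hs.1 hsp, lt_of_le_of_lt hpt ht.2⟩
  have hp01 : p ∈ Ioo (0:ℝ) 1 := ⟨by linarith [hpuv.1], by linarith [hpuv.2]⟩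
  -- g p ≤ c
  have hgp : g p ≤ c := by
    by_contra hgt
    push_neg at hgt
    have htend := hg.2.2 p ⟨hp01.1, hp01.2.le⟩
    have hev : ∀ᶠ r in nhdsWithin p (Iio p), c < g r :=
      htend.eventually (eventually_gt_nhds hgt)
    obtain ⟨l, hl, hsub⟩ := mem_nhdsLT_iff_exists_Ioo_subset.1 hev
    obtain ⟨r, hrA, hlr⟩ := exists_lt_of_lt_csSup ⟨s, hsA⟩ (hl : l < p)
    have hrp : r ≤ p := le_csSup hbdd hrA
    rcases eq_or_lt_of_le hrp with hrp' | hrp'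
    · rw [hrp'] at hrA; linarith [hrA.2]
    · have h3 := hsub ⟨hlr, hrp'⟩
      simp only [mem_setOf_eq] at h3
      linarith [hrA.2]
  -- p is a PSIR
  have hpsir : IsPSIR g p := by
    refine ⟨⟨hp01.1.le, hp01.2⟩, fun r hr => ?_⟩
    rcases le_or_gt r t with hrt | hrt
    · have hrA : r ∉ A := fun hmem => absurd (le_csSup hbdd hmem) (not_le.2 hr.1)
      have : ¬ g r ≤ c := fun hle => hrA ⟨⟨hsp.trans hr.1.le, hrt⟩, hle⟩
      push_neg at this
      linarith
    · have : g t ≤ g r := hg.1 ⟨by linarith [ht.1], by linarith [ht.2]⟩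
        ⟨by nlinarith [ht.1, hs.1], hr.2⟩ hrt.le
      have hct : c < g t := by rw [hc]; linarith
      linarith
  have : p ∈ Ioo u v ∩ PSI g := ⟨hpuv, Or.inl hpsir⟩
  rw [hdisj] at this
  exact this

end Aux8
section Aux9

noncomputable def eFun (n : ℕ) (α : Fin n → ℝ) : ℕ → ℝ :=
  fun j => if j = 0 then 0 else if h : j - 1 < n then α ⟨j - 1, h⟩ else 1

variable {n : ℕ} {α : Fin n → ℝ}

lemma eFun_zero : eFun n α 0 = 0 := by simp [eFun]

lemma eFun_succ' (m : ℕ) : eFun n α (m+1) = if h : m < n then α ⟨m, h⟩ else 1 := by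
  simp [eFun]

lemma eFun_fin (i : Fin n) : eFun n α ((i:ℕ)+1) = α i := by
  rw [eFun_succ', dif_pos i.isLt]

lemma eFun_top : eFun n α (n+1) = 1 := by
  rw [eFun_succ', dif_neg (lt_irrefl n)]

lemma eFun_nonneg (hα : ∀ i, α i ∈ Ioo (0:ℝ) 1) (j : ℕ) : 0 ≤ eFun n α j := by
  cases j with
  | zero => rw [eFun_zero]
  | succ m =>
    rw [eFun_succ']
    split
    · exact (hα _).1.le
    · exact zero_le_one

lemma eFun_le_one (hα : ∀ i, α i ∈ Ioo (0:ℝ) 1) (j : ℕ) : eFun n α j ≤ 1 := by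
  cases j with
  | zero => rw [eFun_zero]; exact zero_le_one
  | succ m =>
    rw [eFun_succ']
    split
    · exact (hα _).2.le
    · exact le_refl 1

lemma eFun_mono (hmono : StrictMono α) (hα : ∀ i, α i ∈ Ioo (0:ℝ) 1)
    {j k : ℕ} (hjk : j ≤ k) : eFun n α j ≤ eFun n α k := by
  cases j with
  | zero => rw [eFun_zero]; exact eFun_nonneg hα k
  | succ m =>
    cases k with
    | zero => omega
    | succ m' =>
      rw [eFun_succ', eFun_succ']
      by_cases h' : m' < n
      · rw [dif_pos h', dif_pos (by omega : m < n)]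
        exact hmono.monotone (by simp [Fin.mk_le_mk]; omega)
      · rw [dif_neg h']
        split
        · exact (hα _).2.le
        · exact le_refl 1

lemma eFun_strict (hmono : StrictMono α) (hα : ∀ i, α i ∈ Ioo (0:ℝ) 1)
    {j : ℕ} (hj : j ≤ n) : eFun n α j < eFun n α (j+1) := by
  cases j with
  | zero =>
    rw [eFun_zero, eFun_succ']
    split
    · exact (hα _).1
    · exact zero_lt_one
  | succ m =>
    rw [eFun_succ', eFun_succ', dif_pos (by omega : m < n)]
    by_cases h' : m + 1 < n
    · rw [dif_pos h']
      exact hmono (by simp [Fin.mk_lt_mk])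
    · rw [dif_neg h']
      exact (hα _).2

lemma eFun_cover (hα : ∀ i, α i ∈ Ioo (0:ℝ) 1) {t : ℝ} (ht : t ∈ Ioc (0:ℝ) 1) :
    ∃ j, j ≤ n ∧ eFun n α j < t ∧ t ≤ eFun n α (j+1) := by
  classical
  set j := Nat.findGreatest (fun j => eFun n α j < t) n with hj
  have hP0 : eFun n α 0 < t := by rw [eFun_zero]; exact ht.1
  have hPj : eFun n α j < t :=
    Nat.findGreatest_spec (P := fun j => eFun n α j < t) (Nat.zero_le n) hP0
  have hjn : j ≤ n := Nat.findGreatest_le n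
  refine ⟨j, hjn, hPj, ?_⟩
  by_cases h : j + 1 ≤ n
  · by_contra hcon
    push_neg at hcon
    exact Nat.findGreatest_is_greatest (Nat.lt_succ_self j) h hcon
  · have : j = n := by omega
    rw [this, eFun_top]
    exact ht.2

end Aux9
section Aux10

noncomputable def cFun (n : ℕ) (α : Fin n → ℝ) (g : ℝ → ℝ) : ℕ → ℝ :=
  fun j => g ((eFun n α j + eFun n α (j+1))/2)

variable {n : ℕ} {α : Fin n → ℝ} {g : ℝ → ℝ}

lemma alpha_not_mem (hmono : StrictMono α) (hα : ∀ i, α i ∈ Ioo (0:ℝ) 1)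
    {j : ℕ} (i : Fin n) :
    α i ∉ Ioo (eFun n α j) (eFun n α (j+1)) := by
  rintro ⟨h1, h2⟩
  rw [← eFun_fin (α := α) i] at h1 h2
  have hij : (i:ℕ) < j := by
    by_contra h
    push_neg at h
    exact absurd (eFun_mono hmono hα (by omega : j + 1 ≤ (i:ℕ) + 1)) (not_le.2 h2)
  have hji : j ≤ (i:ℕ) := by
    by_contra h
    push_neg at h
    exact absurd (eFun_mono hmono hα (by omega : (i:ℕ) + 1 ≤ j)) (not_le.2 h1)
  omega

lemma interval_disj (hmono : StrictMono α) (hα : ∀ i, α i ∈ Ioo (0:ℝ) 1)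
    (hPSI : PSI g ∩ Ioo 0 1 = range α) {j : ℕ} (hj : j ≤ n) :
    Ioo (eFun n α j) (eFun n α (j+1)) ∩ PSI g = ∅ := by
  ext p
  simp only [mem_inter_iff, mem_empty_iff_false, iff_false, not_and]
  intro hp hpsi
  have hp01 : p ∈ Ioo (0:ℝ) 1 :=
    ⟨lt_of_le_of_lt (eFun_nonneg hα j) hp.1, lt_of_lt_of_le hp.2 (eFun_le_one hα (j+1))⟩
  have : p ∈ PSI g ∩ Ioo 0 1 := ⟨hpsi, hp01⟩
  rw [hPSI] at this
  obtain ⟨i, rfl⟩ := this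
  exact alpha_not_mem hmono hα i hp

lemma value_lemma (hmono : StrictMono α) (hα : ∀ i, α i ∈ Ioo (0:ℝ) 1)
    (hg : MemG g) (hPSI : PSI g ∩ Ioo 0 1 = range α) {j : ℕ} (hj : j ≤ n)
    {t : ℝ} (h1 : eFun n α j < t) (h2 : t ≤ eFun n α (j+1)) :
    g t = cFun n α g j := by
  have hst := eFun_strict hmono hα hj
  set a := eFun n α j with ha
  set b := eFun n α (j+1) with hb
  set m := (a + b)/2 with hmdef
  have hm : m ∈ Ioo a b := ⟨by rw [hmdef]; linarith, by rw [hmdef]; linarith⟩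
  have hdisj := interval_disj hmono hα hPSI hj
  have hu : 0 ≤ a := eFun_nonneg hα j
  have hv : b ≤ 1 := eFun_le_one hα (j+1)
  show g t = g m
  rcases lt_or_eq_of_le h2 with h2' | h2'
  · rcases le_total t m with htm | htm
    · exact const_of_no_psi hg hu hv hdisj ⟨h1, h2'⟩ hm htm
    · exact (const_of_no_psi hg hu hv hdisj hm ⟨h1, h2'⟩ htm).symm
  · rw [h2']
    have hb01 : b ∈ Ioc (0:ℝ) 1 := ⟨lt_of_le_of_lt hu hst, hv⟩
    have htend := hg.2.2 b hb01
    have hev : ∀ᶠ u in nhdsWithin b (Iio b), g u = g m := by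
      filter_upwards [Ioo_mem_nhdsLT_of_mem (⟨hm.2, le_refl b⟩ : b ∈ Ioc m b)]
        with u hu'
      exact (const_of_no_psi hg hu hv hdisj hm
        ⟨lt_trans hm.1 hu'.1, hu'.2⟩ hu'.1.le).symm
    have htend2 : Tendsto g (nhdsWithin b (Iio b)) (nhds (g m)) :=
      tendsto_const_nhds.congr' (EventuallyEq.symm hev)
    exact tendsto_nhds_unique htend htend2

lemma g_zero_eq (hmono : StrictMono α) (hα : ∀ i, α i ∈ Ioo (0:ℝ) 1)
    (hg : MemG g) (hPSI : PSI g ∩ Ioo 0 1 = range α) :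
    g 0 = cFun n α g 0 := by
  have hst := eFun_strict hmono hα (Nat.zero_le n)
  rw [eFun_zero] at hst
  set b := eFun n α 1 with hb
  set m := (eFun n α 0 + b)/2 with hmdef
  have hm0 : m = b/2 := by rw [hmdef, eFun_zero]; ring
  have hdisj := interval_disj hmono hα hPSI (Nat.zero_le n)
  rw [eFun_zero] at hdisj
  have hv : b ≤ 1 := eFun_le_one hα 1
  have hmIoo : m ∈ Ioo (0:ℝ) b := ⟨by rw [hm0]; linarith, by rw [hm0]; linarith⟩
  have htend := hg.2.1
  have hev : ∀ᶠ u in nhdsWithin 0 (Ioi 0), g u = g m := by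
    filter_upwards [Ioo_mem_nhdsGT_of_mem (⟨le_refl 0, hmIoo.1⟩ : (0:ℝ) ∈ Ico 0 m)]
      with u hu'
    rcases le_total u m with h | h
    · exact const_of_no_psi hg (le_refl 0) hv hdisj
        ⟨hu'.1, lt_trans hu'.2 hmIoo.2⟩ hmIoo h
    · exact (const_of_no_psi hg (le_refl 0) hv hdisj hmIoo
        ⟨hu'.1, lt_trans hu'.2 hmIoo.2⟩ h).symm
  have htend2 : Tendsto g (nhdsWithin 0 (Ioi 0)) (nhds (g m)) :=
    tendsto_const_nhds.congr' (EventuallyEq.symm hev)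
  show g 0 = g m
  exact tendsto_nhds_unique htend htend2

lemma cFun_strict (hmono : StrictMono α) (hα : ∀ i, α i ∈ Ioo (0:ℝ) 1)
    (hg : MemG g) (hPSI : PSI g ∩ Ioo 0 1 = range α) (i : Fin n) :
    cFun n α g (i:ℕ) < cFun n α g ((i:ℕ)+1) := by
  have hgα : g (α i) = cFun n α g (i:ℕ) := by
    refine value_lemma hmono hα hg hPSI (le_of_lt i.isLt) ?_ ?_
    · rw [← eFun_fin (α := α) i] ; exact eFun_strict hmono hα (le_of_lt i.isLt)
    · rw [← eFun_fin (α := α) i]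
  have hαpsi : α i ∈ PSI g ∩ Ioo 0 1 := by rw [hPSI]; exact Set.mem_range_self i
  rcases hαpsi.1 with hR | hL
  · -- PSIR: compare with midpoint of next interval
    have hii : (i:ℕ) + 1 ≤ n := i.isLt
    have hst := eFun_strict hmono hα hii
    set s := (eFun n α ((i:ℕ)+1) + eFun n α ((i:ℕ)+2))/2 with hsdef
    have hs1 : α i < s := by
      rw [← eFun_fin (α := α) i, hsdef]; push_cast; linarith [eFun_strict hmono hα hii]
    have hs2 : s ≤ 1 := by
      have h1 := eFun_le_one hα ((i:ℕ)+2)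
      have h2 := eFun_le_one hα ((i:ℕ)+1)
      rw [hsdef]; linarith
    have := hR.2 s ⟨hs1, hs2⟩
    rw [hgα] at this
    exact this
  · -- PSIL: contradiction
    exfalso
    set s := (eFun n α (i:ℕ) + eFun n α ((i:ℕ)+1))/2 with hsdef
    have hst := eFun_strict hmono hα (le_of_lt i.isLt)
    have hs0 : 0 ≤ s := by
      have := eFun_nonneg hα (i:ℕ)
      have := eFun_nonneg hα ((i:ℕ)+1)
      rw [hsdef]; linarith
    have hs1 : s < α i := by
      rw [← eFun_fin (α := α) i, hsdef]; linarith
    have hgs : g s = cFun n α g (i:ℕ) := rfl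
    have := hL.2 s ⟨hs0, hs1⟩
    rw [hgα, hgs] at this
    exact lt_irrefl _ this

lemma g_eq_step (hmono : StrictMono α) (hα : ∀ i, α i ∈ Ioo (0:ℝ) 1)
    (hg : MemG g) (hPSI : PSI g ∩ Ioo 0 1 = range α) {t : ℝ} (ht : t ∈ Ioc (0:ℝ) 1) :
    g t = cFun n α g 0
      + ∑ i : Fin n, (cFun n α g ((i:ℕ)+1) - cFun n α g (i:ℕ))
          * (if α i < t then (1:ℝ) else 0) := by
  obtain ⟨j, hjn, h1, h2⟩ := eFun_cover hα ht
  rw [value_lemma hmono hα hg hPSI hjn h1 h2]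
  have hiff : ∀ i : Fin n, (α i < t ↔ (i:ℕ) < j) := by
    intro i
    constructor
    · intro h
      by_contra hc
      push_neg at hc
      have : t ≤ α i := by
        rw [← eFun_fin (α := α) i]
        exact h2.trans (eFun_mono hmono hα (by omega))
      linarith
    · intro h
      have : α i ≤ eFun n α j := by
        rw [← eFun_fin (α := α) i]
        exact eFun_mono hmono hα (by omega)
      linarith
  have hterm : ∀ i : Fin n, (cFun n α g ((i:ℕ)+1) - cFun n α g (i:ℕ))
      * (if α i < t then (1:ℝ) else 0)
      = if (i:ℕ) < j then cFun n α g ((i:ℕ)+1) - cFun n α g (i:ℕ) else 0 := by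
    intro i
    by_cases h : α i < t
    · rw [if_pos h, if_pos ((hiff i).1 h), mul_one]
    · rw [if_neg h, if_neg (fun hc => h ((hiff i).2 hc)), mul_zero]
  rw [Finset.sum_congr rfl (fun i _ => hterm i)]
  have hsum : ∑ i : Fin n, (if (i:ℕ) < j then cFun n α g ((i:ℕ)+1) - cFun n α g (i:ℕ) else 0)
      = cFun n α g j - cFun n α g 0 := by
    rw [Fin.sum_univ_eq_sum_range
      (fun k => if k < j then cFun n α g (k+1) - cFun n α g k else 0)]
    rw [← Finset.sum_subset (Finset.range_subset_range.2 hjn)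
      (fun x _ hx => if_neg (by simpa using hx))]
    rw [Finset.sum_congr rfl (fun x hx => if_pos (Finset.mem_range.1 hx))]
    exact Finset.sum_range_sub (fun k => cFun n α g k) j
  rw [hsum]
  ring

end Aux10
/-- For `0 < α₁ < ⋯ < α_n < 1`, the spectral risk measures whose
spectrum `g` satisfies `PSI(g) ∩ (0,1) = {α₁, …, α_n}` are exactly the functionals
`λ₀𝔼 + λ₁ ES_{α₁} + ⋯ + λ_n ES_{α_n}` with `λ₀ ≥ 0`, `λᵢ > 0` and `λ₀ + ∑ λᵢ = 1`
(as functionals on L∞). -/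
theorem stmt_19 {Ω : Type*} [MeasurableSpace Ω] (P : MeasureTheory.Measure Ω)
    [MeasureTheory.IsProbabilityMeasure P] (hP : Atomless P)
    (n : ℕ) (α : Fin n → ℝ) (hmono : StrictMono α) (hα : ∀ i, α i ∈ Ioo (0:ℝ) 1) :
    {F : (Ω → ℝ) → ℝ | ∃ g : ℝ → ℝ, IsRiskSpectrum g ∧
        PSI g ∩ Ioo 0 1 = Set.range α ∧
        ∀ X : Ω → ℝ, MemLinf P X → F X = specRM P g X} =
    {F : (Ω → ℝ) → ℝ | ∃ (l₀ : ℝ) (l : Fin n → ℝ), 0 ≤ l₀ ∧ (∀ i, 0 < l i) ∧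
        l₀ + ∑ i, l i = 1 ∧
        ∀ X : Ω → ℝ, MemLinf P X →
          F X = l₀ * (∫ ω, X ω ∂P) + ∑ i, l i * ES P (α i) X} := by
  have hne : ∀ i, (1:ℝ) - α i ≠ 0 := fun i => by have := (hα i).2; intro h; linarith
  ext F
  simp only [mem_setOf_eq]
  constructor
  · rintro ⟨g, ⟨hgG, hgnn, hgint⟩, hPSI, hF⟩
    have hrep := fun (t : ℝ) (ht : t ∈ Ioc (0:ℝ) 1) => g_eq_step hmono hα hgG hPSI ht
    refine ⟨cFun n α g 0, fun i => (cFun n α g ((i:ℕ)+1) - cFun n α g (i:ℕ)) * (1 - α i),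
      ?_, ?_, ?_, ?_⟩
    · apply hgnn
      have h0 := eFun_nonneg hα (n := n) (α := α) 1
      have h1 := eFun_le_one hα (n := n) (α := α) 1
      constructor
      · rw [eFun_zero]; linarith
      · rw [eFun_zero]; linarith
    · intro i
      exact mul_pos (sub_pos.2 (cFun_strict hmono hα hgG hPSI i))
        (by have := (hα i).2; linarith)
    · have heq : ∫ t in (0:ℝ)..1, g t
          = ∫ t in (0:ℝ)..1, (cFun n α g 0
            + ∑ i : Fin n, (cFun n α g ((i:ℕ)+1) - cFun n α g (i:ℕ))
                * (if α i < t then (1:ℝ) else 0)) := by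
        rw [intervalIntegral.integral_of_le zero_le_one,
          intervalIntegral.integral_of_le zero_le_one]
        exact setIntegral_congr_fun measurableSet_Ioc (fun t ht => hrep t ht)
      rw [hgint, core_int_one (cFun n α g 0) α _ hα] at heq
      rw [← heq]
    · intro X hX
      obtain ⟨hXm, C, hC⟩ := hX
      rw [hF X ⟨hXm, C, hC⟩]
      unfold specRM
      have heq : ∫ t in (0:ℝ)..1, g t * Q P X t
          = ∫ t in (0:ℝ)..1, (cFun n α g 0
            + ∑ i : Fin n, (cFun n α g ((i:ℕ)+1) - cFun n α g (i:ℕ))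
                * (if α i < t then (1:ℝ) else 0)) * Q P X t := by
        rw [intervalIntegral.integral_of_le zero_le_one,
          intervalIntegral.integral_of_le zero_le_one]
        exact setIntegral_congr_fun measurableSet_Ioc
          (fun t ht => by rw [hrep t ht])
      rw [heq, core_int P hXm hC (cFun n α g 0) α _ hα]
      congr 1
      refine Finset.sum_congr rfl (fun i _ => ?_)
      unfold ES
      have h := hne i
      field_simp
  · rintro ⟨l₀, l, hl₀, hl, hsum, hF⟩
    have hc : ∀ i, 0 < l i * (1 - α i)⁻¹ := fun i =>
      mul_pos (hl i) (inv_pos.2 (by have := (hα i).2; linarith))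
    refine ⟨fun t => l₀ + ∑ i, (l i * (1 - α i)⁻¹) * (if α i < t then (1:ℝ) else 0),
      ⟨sg_memG hα (fun i => (hc i).le), fun t _ => sg_nonneg hl₀ (fun i => (hc i).le) t, ?_⟩,
      sg_psi hα hc, ?_⟩
    · rw [core_int_one l₀ α _ hα]
      have : ∀ i : Fin n, l i * (1 - α i)⁻¹ * (1 - α i) = l i := fun i => by
        field_simp
        exact mul_div_cancel_right₀ (l i) (hne i)
      rw [Finset.sum_congr rfl (fun i _ => this i)]
      exact hsum
    · intro X hX
      obtain ⟨hXm, C, hC⟩ := hX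
      rw [hF X ⟨hXm, C, hC⟩]
      unfold specRM
      rw [core_int P hXm hC l₀ α _ hα]
      congr 1
      refine Finset.sum_congr rfl (fun i _ => ?_)
      unfold ES
      ring
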